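/- Under the assumptions of the context-specific Markov property (strong regime-acyclicity, causal sufficiency), if X and Y are non-adjacent in G_ident(r) and both differ from R, then there exists a separating set Z contained in the G_ident(r)-adjacencies of X or of Y such that either X ⫫ Y | Z, or X ⫫ Y | Z, R = r with Z not containing R. -/
import Mathlib


open scoped Classical

noncomputable def pr {Ω : Type*} [Fintype Ω] (P : Ω → ℝ) (A : Set Ω) : ℝ :=
  ∑ ω, if ω ∈ A then P ω else 0

noncomputable def cpr {Ω : Type*} [Fintype Ω] (P : Ω → ℝ) (A B : Set Ω) : ℝ :=
  pr P (A ∩ B) / pr P B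

/-- `X ⫫ Y | {F_j = z_j : j ∈ Zs}, Extra` for all values. -/
def ciGiven {ι : Type*} [Fintype ι] [DecidableEq ι]
    {Val : ι → Type*} {Noise : ι → Type*} [∀ j, Fintype (Noise j)]
    (P : (∀ j, Noise j) → ℝ) (F : ∀ i : ι, (∀ j, Noise j) → Val i)
    (X Y : ι) (Zs : Set ι) (Extra : Set (∀ j, Noise j)) : Prop :=
  ∀ (z : ∀ j, Val j) (x : Val X) (y : Val Y),
    pr P ({η | ∀ j ∈ Zs, F j η = z j} ∩ Extra) ≠ 0 →
    cpr P ({η | F X η = x} ∩ {η | F Y η = y}) ({η | ∀ j ∈ Zs, F j η = z j} ∩ Extra)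
      = cpr P {η | F X η = x} ({η | ∀ j ∈ Zs, F j η = z j} ∩ Extra)
        * cpr P {η | F Y η = y} ({η | ∀ j ∈ Zs, F j η = z j} ∩ Extra)

/-- The identified graph `G_ident(r)`: descriptive edges plus all union edges between
union-ancestors of `R`. -/
def identEdge {ι : Type*} (PaU PaD : ι → Set ι) (R : ι) (a b : ι) : Prop :=
  a ∈ PaD b ∨ (a ∈ PaU b ∧ Relation.ReflTransGen (fun x y => x ∈ PaU y) a R ∧
    Relation.ReflTransGen (fun x y => x ∈ PaU y) b R)

lemma indep_coord {ι : Type*} [Fintype ι] [DecidableEq ι] {Noise : ι → Type*}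
    [∀ j, Fintype (Noise j)]
    (p : ∀ j, Noise j → ℝ) (hsump : ∀ j, ∑ n, p j n = 1)
    (P : (∀ j, Noise j) → ℝ) (hP : ∀ η, P η = ∏ j, p j (η j)) (W : ι)
    (C' : Noise W → Prop) (D : Set (∀ j, Noise j))
    (hD : ∀ η η' : ∀ j, Noise j, (∀ j, j ≠ W → η j = η' j) → η ∈ D → η' ∈ D) :
    pr P ({η | C' (η W)} ∩ D) = pr P {η | C' (η W)} * pr P D := by
  by_cases hne : Nonempty (Noise W)
  · obtain ⟨a₀⟩ := hne
    set e := Equiv.piSplitAt W Noise with he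
    have heW : ∀ (a : Noise W) (b : ∀ j : {j // j ≠ W}, Noise j), e.symm (a, b) W = a := by
      intro a b; simp [he, Equiv.piSplitAt]
    have heo : ∀ (a : Noise W) (b : ∀ j : {j // j ≠ W}, Noise j) (j : ι) (h : j ≠ W),
        e.symm (a, b) j = b ⟨j, h⟩ := by
      intro a b j h; simp [he, Equiv.piSplitAt, h]
    set D' : (∀ j : {j // j ≠ W}, Noise j) → Prop := fun b => e.symm (a₀, b) ∈ D with hD'
    have hDiff : ∀ (a : Noise W) b, (e.symm (a, b) ∈ D ↔ D' b) := by
      intro a b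
      constructor <;> intro h <;> refine hD _ _ (fun j hj => ?_) h <;>
        rw [heo _ _ j hj, heo _ _ j hj]
    have key : ∀ (A : Set (∀ j, Noise j)) (c : Noise W → Prop)
        (d : (∀ j : {j // j ≠ W}, Noise j) → Prop),
        (∀ a b, (e.symm (a, b) ∈ A ↔ (c a ∧ d b))) →
        pr P A = (∑ a, if c a then p W a else 0) *
          (∑ b : ∀ j : {j // j ≠ W}, Noise j,
            if d b then ∏ j : {j // j ≠ W}, p j.1 (b j) else 0) := by
      intro A c d hA
      have h1 : pr P A = ∑ q : Noise W × (∀ j : {j // j ≠ W}, Noise j),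
          if e.symm q ∈ A then P (e.symm q) else 0 := (Equiv.sum_comp e.symm _).symm
      rw [h1, Fintype.sum_prod_type, Finset.sum_mul_sum]
      refine Finset.sum_congr rfl fun a _ => Finset.sum_congr rfl fun b _ => ?_
      have hPe : P (e.symm (a, b)) = p W a * ∏ j : {j // j ≠ W}, p j.1 (b j) := by
        rw [hP, Fintype.prod_eq_mul_prod_compl W, heW]
        congr 1
        rw [Finset.prod_subtype (p := fun j => j ≠ W) ({W}ᶜ : Finset ι) (fun x => by simp)
          (fun j => p j (e.symm (a, b) j))]
        exact Finset.prod_congr rfl fun j _ => by rw [heo a b j.1 j.2]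
      by_cases hc : c a <;> by_cases hd : d b <;> simp [hA, hc, hd, hPe]
    have hT : (∑ b : ∀ j : {j // j ≠ W}, Noise j, ∏ j : {j // j ≠ W}, p j.1 (b j)) = 1 := by
      rw [← Fintype.piFinset_univ, ← Finset.prod_univ_sum]
      simp [hsump]
    have k1 := key ({η | C' (η W)} ∩ D) C' D' (by
      intro a b
      constructor
      · rintro ⟨h1, h2⟩
        exact ⟨by rwa [Set.mem_setOf_eq, heW] at h1, (hDiff a b).mp h2⟩
      · rintro ⟨h1, h2⟩
        exact ⟨by rw [Set.mem_setOf_eq, heW]; exact h1, (hDiff a b).mpr h2⟩)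
    have k2 := key {η | C' (η W)} C' (fun _ => True) (by
      intro a b
      simp only [Set.mem_setOf_eq, heW, and_true])
    have k3 := key D (fun _ => True) D' (by
      intro a b
      simp only [true_and]
      exact hDiff a b)
    rw [k1, k2, k3]
    simp only [if_true]
    rw [hT, hsump]
    ring
  · have hE : IsEmpty (∀ j, Noise j) := ⟨fun η => (not_nonempty_iff.mp hne).false (η W)⟩
    have h0 : ∀ A : Set (∀ j, Noise j), pr P A = 0 := by
      intro A; unfold pr; rw [Finset.univ_eq_empty, Finset.sum_empty]
    simp [h0]

lemma ci_core {ι : Type*} [Fintype ι] [DecidableEq ι] {Noise : ι → Type*}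
    [∀ j, Fintype (Noise j)] {α β : Type*}
    (p : ∀ j, Noise j → ℝ) (hsump : ∀ j, ∑ n, p j n = 1)
    (P : (∀ j, Noise j) → ℝ) (hP : ∀ η, P η = ∏ j, p j (η j)) (W : ι)
    (S : Set (∀ j, Noise j)) (FW : (∀ j, Noise j) → α) (FV : (∀ j, Noise j) → β)
    (hS : ∀ η η' : ∀ j, Noise j, (∀ j, j ≠ W → η j = η' j) → η ∈ S → η' ∈ S)
    (hFW : ∀ η ∈ S, ∀ η' ∈ S, η W = η' W → FW η = FW η')
    (hFV : ∀ η ∈ S, ∀ η' ∈ S, (∀ j, j ≠ W → η j = η' j) → FV η = FV η')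
    (x : α) (y : β) (hpr : pr P S ≠ 0) :
    cpr P ({η | FW η = x} ∩ {η | FV η = y}) S
      = cpr P {η | FW η = x} S * cpr P {η | FV η = y} S := by
  set C' : Noise W → Prop := fun n => ∃ η, η ∈ S ∧ η W = n ∧ FW η = x with hC'
  have hmem : ∀ η ∈ S, (FW η = x ↔ C' (η W)) := by
    intro η hη
    constructor
    · intro h; exact ⟨η, hη, rfl, h⟩
    · rintro ⟨η', hη', hW, hx⟩
      rw [hFW η hη η' hη' hW.symm]; exact hx
  have hDinv : ∀ η η' : ∀ j, Noise j, (∀ j, j ≠ W → η j = η' j) →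
      η ∈ ({η | FV η = y} ∩ S) → η' ∈ ({η | FV η = y} ∩ S) := by
    rintro η η' hagree ⟨h1, h2⟩
    have h2' := hS η η' hagree h2
    exact ⟨by rw [Set.mem_setOf_eq, ← hFV η h2 η' h2' hagree]; exact h1, h2'⟩
  have k1 : pr P (({η | FW η = x} ∩ {η | FV η = y}) ∩ S)
      = pr P {η | C' (η W)} * pr P ({η | FV η = y} ∩ S) := by
    have hset : (({η | FW η = x} ∩ {η | FV η = y}) ∩ S)
        = ({η | C' (η W)} ∩ ({η | FV η = y} ∩ S)) := by
      ext η
      constructor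
      · rintro ⟨⟨h1, h2⟩, h3⟩; exact ⟨(hmem η h3).mp h1, h2, h3⟩
      · rintro ⟨h1, h2, h3⟩; exact ⟨⟨(hmem η h3).mpr h1, h2⟩, h3⟩
    rw [hset]
    exact indep_coord p hsump P hP W C' _ hDinv
  have k2 : pr P ({η | FW η = x} ∩ S) = pr P {η | C' (η W)} * pr P S := by
    have hset : ({η | FW η = x} ∩ S) = ({η | C' (η W)} ∩ S) := by
      ext η
      exact ⟨fun ⟨h1, h2⟩ => ⟨(hmem η h2).mp h1, h2⟩,
        fun ⟨h1, h2⟩ => ⟨(hmem η h2).mpr h1, h2⟩⟩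
    rw [hset]
    exact indep_coord p hsump P hP W C' S hS
  unfold cpr
  rw [k1, k2]
  field_simp

/-- under the assumptions of the context-specific Markov property, if
`X` and `Y` (both `≠ R`) are non-adjacent in `G_ident(r)`, then there exists a
separating set `Z` contained in the `G_ident(r)`-adjacencies of `X` or of `Y` with
either `X ⫫ Y | Z`, or `X ⫫ Y | Z, R = r` and `R ∉ Z`. -/
theorem stmt_14 {ι : Type*} [Fintype ι] [DecidableEq ι]
    (Val : ι → Type*) (Noise : ι → Type*) [∀ j, Fintype (Noise j)]
    (p : ∀ j, Noise j → ℝ)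
    (hpos : ∀ (j : ι) (n : Noise j), 0 ≤ p j n) (hsump : ∀ j : ι, ∑ n, p j n = 1)
    (P : (∀ j, Noise j) → ℝ)
    (hP : ∀ η : ∀ j, Noise j, P η = ∏ j, p j (η j))  -- causal sufficiency
    (R : ι) (r : Val R)
    (PaU PaD : ι → Set ι)  -- union parents, descriptive parents for regime r
    (f : ∀ i : ι, (∀ j, Val j) → Noise i → Val i)
    (F : ∀ i : ι, (∀ j, Noise j) → Val i)
    (hfix : ∀ (i : ι) (η : ∀ j, Noise j), F i η = f i (fun j => F j η) (η i))
    (hpaU : ∀ (i : ι) (v v' : ∀ j, Val j) (n : Noise i),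
      (∀ j ∈ PaU i, v j = v' j) → f i v n = f i v' n)
    (hancU : ∀ (i : ι) (η η' : ∀ j, Noise j),
      (∀ j : ι, Relation.ReflTransGen (fun a b => a ∈ PaU b) j i → η j = η' j) →
      F i η = F i η')
    (hancD : ∀ (i : ι) (η η' : ∀ j, Noise j), F R η = r → F R η' = r →
      (∀ j : ι, Relation.ReflTransGen (fun a b => a ∈ PaD b) j i → η j = η' j) →
      F i η = F i η')
    (hlocD : ∀ i : ι, i ≠ R → ∀ (η η' : ∀ j, Noise j), F R η = r → F R η' = r →
      (∀ j ∈ PaD i, F j η = F j η') → η i = η' i → F i η = F i η')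
    -- strong regime-acyclicity:
    (hacycD : ∀ i : ι, ¬ Relation.TransGen (fun a b => a ∈ PaD b) i i)
    (hacycU : ∀ i : ι, Relation.ReflTransGen (fun a b => a ∈ PaU b) i R →
      ¬ Relation.TransGen (fun a b => a ∈ PaU b) i i)
    (X Y : ι) (hXR : X ≠ R) (hYR : Y ≠ R) (hXY : X ≠ Y)
    (hnonadj : ¬ identEdge PaU PaD R X Y ∧ ¬ identEdge PaU PaD R Y X) :
    ∃ Zs : Set ι,
      (Zs ⊆ {j | identEdge PaU PaD R j X ∨ identEdge PaU PaD R X j} ∨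
       Zs ⊆ {j | identEdge PaU PaD R j Y ∨ identEdge PaU PaD R Y j}) ∧
      (ciGiven P F X Y Zs Set.univ ∨
       (R ∉ Zs ∧ ciGiven P F X Y Zs {η | F R η = r})) := by
  classical
  -- symmetry of `ciGiven` in the two variables
  have ciGiven_symm : ∀ (A B : ι) (Zs : Set ι) (E : Set (∀ j, Noise j)),
      ciGiven P F A B Zs E → ciGiven P F B A Zs E := by
    intro A B Zs E h z x y hpr
    have h' := h z y x hpr
    rw [Set.inter_comm] at h'
    rw [h', mul_comm]
  -- Option A: condition on the union-parents of `W`, where `W` is a union-ancestor of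
  -- `R` and `V` is not a union-descendant of `W`.
  have optA : ∀ W V : ι, W ≠ V →
      Relation.ReflTransGen (fun a b => a ∈ PaU b) W R →
      ¬ Relation.TransGen (fun a b => a ∈ PaU b) W V →
      ciGiven P F W V (PaU W) Set.univ := by
    intro W V hWV hWR hWnV z x y hpr
    refine ci_core p hsump P hP W _ (F W) (F V) ?_ ?_ ?_ x y hpr
    · rintro η η' hag ⟨h1, -⟩
      refine ⟨fun j hj => ?_, trivial⟩
      have hjη : F j η' = F j η := by
        refine hancU j η' η fun k hk => ?_
        refine (hag k fun hkW => ?_).symm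
        subst hkW
        exact hacycU _ hWR (Relation.TransGen.tail' hk hj)
      rw [hjη]
      exact h1 j hj
    · intro η hη η' hη' hWW
      rw [hfix W η, hfix W η', hWW]
      exact hpaU W _ _ (η' W) fun j hj => by rw [hη.1 j hj, hη'.1 j hj]
    · intro η _ η' _ hag
      refine hancU V η η' fun k hk => hag k ?_
      rintro rfl
      rcases Relation.reflTransGen_iff_eq_or_transGen.mp hk with h | h
      · exact hWV h.symm
      · exact hWnV h
  -- Option B: condition on the descriptive parents of `W` (minus `R`) and on `R = r`,
  -- where `W` is not a union-ancestor of `R` and `V` is not a descriptive (resp. union)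
  -- descendant of `W`.
  have optB : ∀ W V : ι, W ≠ V →
      ¬ Relation.ReflTransGen (fun a b => a ∈ PaU b) W R →
      (¬ Relation.TransGen (fun a b => a ∈ PaD b) W V ∨
       ¬ Relation.TransGen (fun a b => a ∈ PaU b) W V) →
      ciGiven P F W V (PaD W \ {R}) {η | F R η = r} := by
    intro W V hWV hWR hVcase z x y hpr
    have hWneR : W ≠ R := fun h => hWR (h ▸ Relation.ReflTransGen.refl)
    refine ci_core p hsump P hP W _ (F W) (F V) ?_ ?_ ?_ x y hpr
    · rintro η η' hag ⟨h1, h2⟩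
      have hRη' : F R η' = F R η := by
        refine hancU R η' η fun k hk => ?_
        refine (hag k fun hkW => ?_).symm
        subst hkW
        exact hWR hk
      have h2' : F R η' = r := by rw [hRη']; exact h2
      refine ⟨fun j hj => ?_, h2'⟩
      have hjη : F j η' = F j η := by
        refine hancD j η' η h2' h2 fun k hk => ?_
        refine (hag k fun hkW => ?_).symm
        subst hkW
        exact hacycD _ (Relation.TransGen.tail' hk hj.1)
      rw [hjη]
      exact h1 j hj
    · intro η hη η' hη' hWW
      refine hlocD W hWneR η η' hη.2 hη'.2 (fun j hj => ?_) hWW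
      by_cases hjR : j = R
      · subst hjR
        rw [hη.2, hη'.2]
      · rw [hη.1 j ⟨hj, hjR⟩, hη'.1 j ⟨hj, hjR⟩]
    · intro η hη η' hη' hag
      rcases hVcase with hD | hU
      · refine hancD V η η' hη.2 hη'.2 fun k hk => hag k ?_
        rintro rfl
        rcases Relation.reflTransGen_iff_eq_or_transGen.mp hk with h | h
        · exact hWV h.symm
        · exact hD h
      · refine hancU V η η' fun k hk => hag k ?_
        rintro rfl
        rcases Relation.reflTransGen_iff_eq_or_transGen.mp hk with h | h
        · exact hWV h.symm
        · exact hU h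
  -- adjacency facts
  have subsetA : ∀ W : ι, Relation.ReflTransGen (fun a b => a ∈ PaU b) W R →
      PaU W ⊆ {j | identEdge PaU PaD R j W ∨ identEdge PaU PaD R W j} := by
    intro W hWR j hj
    exact Or.inl (Or.inr ⟨hj, Relation.ReflTransGen.head hj hWR, hWR⟩)
  have subsetB : ∀ W : ι,
      PaD W \ {R} ⊆ {j | identEdge PaU PaD R j W ∨ identEdge PaU PaD R W j} := by
    intro W j hj
    exact Or.inl (Or.inl hj.1)
  have hRnot : ∀ W : ι, R ∉ PaD W \ {R} := fun W h => h.2 rfl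
  by_cases hXU : Relation.ReflTransGen (fun a b => a ∈ PaU b) X R
  · by_cases hYU : Relation.ReflTransGen (fun a b => a ∈ PaU b) Y R
    · -- both union-ancestors of `R`
      by_cases hXtY : Relation.TransGen (fun a b => a ∈ PaU b) X Y
      · have hYtX : ¬ Relation.TransGen (fun a b => a ∈ PaU b) Y X :=
          fun h => hacycU X hXU (hXtY.trans h)
        exact ⟨PaU Y, Or.inr (subsetA Y hYU),
          Or.inl (ciGiven_symm _ _ _ _ (optA Y X hXY.symm hYU hYtX))⟩
      · exact ⟨PaU X, Or.inl (subsetA X hXU), Or.inl (optA X Y hXY hXU hXtY)⟩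
    · -- `Y` not a union-ancestor of `R`
      by_cases hDYX : Relation.TransGen (fun a b => a ∈ PaD b) Y X
      · have hUYX : ¬ Relation.TransGen (fun a b => a ∈ PaU b) Y X :=
          fun h => hYU (h.to_reflTransGen.trans hXU)
        exact ⟨PaD Y \ {R}, Or.inr (subsetB Y), Or.inr ⟨hRnot Y,
          ciGiven_symm _ _ _ _ (optB Y X hXY.symm hYU (Or.inr hUYX))⟩⟩
      · exact ⟨PaD Y \ {R}, Or.inr (subsetB Y), Or.inr ⟨hRnot Y,
          ciGiven_symm _ _ _ _ (optB Y X hXY.symm hYU (Or.inl hDYX))⟩⟩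
  · -- `X` not a union-ancestor of `R`
    by_cases hDXY : Relation.TransGen (fun a b => a ∈ PaD b) X Y
    · by_cases hYU : Relation.ReflTransGen (fun a b => a ∈ PaU b) Y R
      · have hUXY : ¬ Relation.TransGen (fun a b => a ∈ PaU b) X Y :=
          fun h => hXU (h.to_reflTransGen.trans hYU)
        exact ⟨PaD X \ {R}, Or.inl (subsetB X), Or.inr ⟨hRnot X,
          optB X Y hXY hXU (Or.inr hUXY)⟩⟩
      · have hDYX : ¬ Relation.TransGen (fun a b => a ∈ PaD b) Y X :=
          fun h => hacycD X (hDXY.trans h)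
        exact ⟨PaD Y \ {R}, Or.inr (subsetB Y), Or.inr ⟨hRnot Y,
          ciGiven_symm _ _ _ _ (optB Y X hXY.symm hYU (Or.inl hDYX))⟩⟩
    · exact ⟨PaD X \ {R}, Or.inl (subsetB X), Or.inr ⟨hRnot X,
        optB X Y hXY hXU (Or.inl hDXY)⟩⟩
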